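/- arXiv:2604.22159 — 3 statements merged into one kernel-verified Lean document; each statement's English description precedes it below -/
import Mathlib

section
/- Let A, B be real n×n positive semidefinite matrices, and suppose A = LLᵀ and B = MMᵀ for real n×n matrices L, M. Then tr((A^{1/2} B A^{1/2})^{1/2}) = ‖Lᵀ M‖₊, and consequently the squared Bures–Wasserstein distance satisfies dist_BW²(A, B) = ‖L‖_F² + ‖M‖_F² − 2‖Lᵀ M‖₊. -/
open Matrix BigOperators Classical

/-- Squared Frobenius norm. -/
def frobSq {m n : Type*} [Fintype m] [Fintype n] (C : Matrix m n ℝ) : ℝ :=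
  ∑ i, ∑ j, (C i j) ^ 2

/-- Frobenius norm. -/
noncomputable def frobNorm {m n : Type*} [Fintype m] [Fintype n]
    (C : Matrix m n ℝ) : ℝ :=
  Real.sqrt (frobSq C)

/-- Square root of a positive semidefinite matrix (junk value `0` otherwise). -/
noncomputable def psdSqrt {n : Type*} [Fintype n] [DecidableEq n]
    (A : Matrix n n ℝ) : Matrix n n ℝ :=
  if h : A.PosSemidef then
    (h.1.eigenvectorUnitary : Matrix n n ℝ) * diagonal ((↑) ∘ (√·) ∘ h.1.eigenvalues) *
      (star h.1.eigenvectorUnitary : Matrix n n ℝ)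
  else 0

/-- Nuclear norm: `‖C‖₊ = tr((CᵀC)^{1/2})`, the sum of the singular values. -/
noncomputable def nuclearNorm {m n : Type*} [Fintype m] [Fintype n] [DecidableEq n]
    (C : Matrix m n ℝ) : ℝ :=
  (psdSqrt (Cᵀ * C)).trace

/-- Squared Bures–Wasserstein distance:
`dist_BW²(A,B) = tr A + tr B − 2 tr((A^{1/2} B A^{1/2})^{1/2})`. -/
noncomputable def distBWsq {n : Type*} [Fintype n] [DecidableEq n]
    (A B : Matrix n n ℝ) : ℝ :=
  A.trace + B.trace - 2 * (psdSqrt (psdSqrt A * B * psdSqrt A)).trace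

section Lemmas
variable {n : Type*} [Fintype n] [DecidableEq n]
open Polynomial

lemma mconj_pow (U V D : Matrix n n ℝ) (hUV : U * V = 1) (hVU : V * U = 1) (k : ℕ) :
    (U * D * V) ^ k = U * D ^ k * V := by
  induction k with
  | zero => simp [hUV]
  | succ k ih =>
    rw [pow_succ, ih, pow_succ]
    calc U * D ^ k * V * (U * D * V) = U * D ^ k * (V * U) * (D * V) := by
          simp only [mul_assoc]
    _ = U * (D ^ k * D) * V := by rw [hVU]; simp only [mul_assoc, one_mul]

lemma maeval_conj (U V D : Matrix n n ℝ) (hUV : U * V = 1) (hVU : V * U = 1) (p : ℝ[X]) :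
    aeval (U * D * V) p = U * aeval D p * V := by
  induction p using Polynomial.induction_on' with
  | add p q hp hq => rw [map_add, map_add, hp, hq, mul_add, add_mul]
  | monomial k a =>
    rw [aeval_monomial, aeval_monomial, mconj_pow U V D hUV hVU]
    simp only [Algebra.algebraMap_eq_smul_one, smul_mul_assoc, one_mul, Matrix.mul_smul]

lemma maeval_diagonal (d : n → ℝ) (p : ℝ[X]) :
    aeval (Matrix.diagonal d) p = Matrix.diagonal (fun i => p.eval (d i)) := by
  have h : Matrix.diagonal d = Matrix.diagonalAlgHom ℝ d := rfl
  rw [h, aeval_algHom_apply]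
  have h2 : (aeval d p : n → ℝ) = fun i => p.eval (d i) := by
    funext i
    simp [aeval_fn_apply, Polynomial.aeval_def, Polynomial.eval₂_eq_eval_map]
  show Matrix.diagonal (aeval d p) = _
  rw [h2]

lemma aeval_psd_sqrt {P : Matrix n n ℝ} (hP : P.PosSemidef) (p : ℝ[X])
    (hp : ∀ i, p.eval (hP.1.eigenvalues i) = Real.sqrt (hP.1.eigenvalues i)) :
    aeval P p = (hP.1.eigenvectorUnitary : Matrix n n ℝ) *
      diagonal ((↑) ∘ (√·) ∘ hP.1.eigenvalues) * (star hP.1.eigenvectorUnitary : Matrix n n ℝ) := by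
  set U : Matrix n n ℝ := (hP.1.eigenvectorUnitary : Matrix n n ℝ) with hU
  have hUV : U * star U = 1 := mem_unitaryGroup_iff.mp hP.1.eigenvectorUnitary.2
  have hVU : star U * U = 1 := mem_unitaryGroup_iff'.mp hP.1.eigenvectorUnitary.2
  have hspec : P = U * Matrix.diagonal (RCLike.ofReal ∘ hP.1.eigenvalues) * star U :=
    hP.1.spectral_theorem
  conv_lhs => rw [hspec]
  rw [maeval_conj _ _ _ hUV hVU, maeval_diagonal]
  have hd : (fun i => p.eval ((RCLike.ofReal ∘ hP.1.eigenvalues : n → ℝ) i))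
      = (RCLike.ofReal ∘ Real.sqrt ∘ hP.1.eigenvalues : n → ℝ) := by
    funext i
    simp [RCLike.ofReal_real_eq_id, hp i]
  rw [hd]; rfl

lemma pow_mul_transpose (X : Matrix n n ℝ) (k : ℕ) :
    (X * Xᵀ) ^ (k + 1) = X * (Xᵀ * X) ^ k * Xᵀ := by
  induction k with
  | zero => simp
  | succ k ih =>
    rw [pow_succ, ih, pow_succ]
    simp only [mul_assoc]

lemma trace_pow_comm (X : Matrix n n ℝ) (k : ℕ) :
    ((X * Xᵀ) ^ k).trace = ((Xᵀ * X) ^ k).trace := by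
  cases k with
  | zero => simp
  | succ k =>
    rw [pow_mul_transpose, pow_succ, Matrix.trace_mul_comm (X * (Xᵀ * X) ^ k) Xᵀ]
    rw [Matrix.trace_mul_comm ((Xᵀ * X) ^ k) (Xᵀ * X)]
    simp only [mul_assoc]

lemma trace_aeval_comm (X : Matrix n n ℝ) (p : ℝ[X]) :
    (aeval (X * Xᵀ) p).trace = (aeval (Xᵀ * X) p).trace := by
  induction p using Polynomial.induction_on' with
  | add p q hp hq => rw [map_add, map_add, Matrix.trace_add, Matrix.trace_add, hp, hq]
  | monomial k a =>
    rw [aeval_monomial, aeval_monomial]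
    simp only [Algebra.algebraMap_eq_smul_one, smul_mul_assoc, one_mul, Matrix.trace_smul,
      trace_pow_comm X k]

lemma trace_psdSqrt_comm (X : Matrix n n ℝ) :
    (psdSqrt (X * Xᵀ)).trace = (psdSqrt (Xᵀ * X)).trace := by
  have hP : (X * Xᵀ).PosSemidef := by
    simpa [Matrix.conjTranspose_eq_transpose_of_trivial] using
      Matrix.posSemidef_self_mul_conjTranspose X
  have hQ : (Xᵀ * X).PosSemidef := by
    simpa [Matrix.conjTranspose_eq_transpose_of_trivial] using
      Matrix.posSemidef_conjTranspose_mul_self X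
  classical
  set s : Finset ℝ := (Finset.univ.image hP.1.eigenvalues) ∪ (Finset.univ.image hQ.1.eigenvalues)
    with hs
  set p : ℝ[X] := Lagrange.interpolate s id Real.sqrt with hpdef
  have hinj : Set.InjOn (id : ℝ → ℝ) s := Function.injective_id.injOn
  have hnode : ∀ x ∈ s, p.eval x = Real.sqrt x := by
    intro x hx
    rw [hpdef]; simpa using Lagrange.eval_interpolate_at_node Real.sqrt hinj hx
  have hpP : ∀ i, p.eval (hP.1.eigenvalues i) = Real.sqrt (hP.1.eigenvalues i) := fun i =>
    hnode _ (Finset.mem_union_left _ (Finset.mem_image_of_mem _ (Finset.mem_univ i)))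
  have hpQ : ∀ i, p.eval (hQ.1.eigenvalues i) = Real.sqrt (hQ.1.eigenvalues i) := fun i =>
    hnode _ (Finset.mem_union_right _ (Finset.mem_image_of_mem _ (Finset.mem_univ i)))
  rw [psdSqrt, dif_pos hP, psdSqrt, dif_pos hQ, ← aeval_psd_sqrt hP p hpP,
    ← aeval_psd_sqrt hQ p hpQ]
  exact trace_aeval_comm X p

end Lemmas

/-- Bures–Wasserstein distance in terms of Cholesky-type factors:
`tr((A^{1/2}BA^{1/2})^{1/2}) = ‖LᵀM‖₊` and
`dist_BW²(A,B) = ‖L‖_F² + ‖M‖_F² − 2‖LᵀM‖₊`. -/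
theorem distBW_eq_cholesky (n : ℕ) (A B L M : Matrix (Fin n) (Fin n) ℝ)
    (hA : A.PosSemidef) (hB : B.PosSemidef)
    (hL : A = L * Lᵀ) (hM : B = M * Mᵀ) :
    (psdSqrt (psdSqrt A * B * psdSqrt A)).trace = nuclearNorm (Lᵀ * M) ∧
    distBWsq A B = frobSq L + frobSq M - 2 * nuclearNorm (Lᵀ * M) := by
  set S := (hA.1.eigenvectorUnitary : Matrix (Fin n) (Fin n) ℝ) *
    diagonal ((↑) ∘ (√·) ∘ hA.1.eigenvalues) *
      (star hA.1.eigenvectorUnitary : Matrix (Fin n) (Fin n) ℝ) with hSdef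
  have hAs : psdSqrt A = S := dif_pos hA
  have hUV : (hA.1.eigenvectorUnitary : Matrix (Fin n) (Fin n) ℝ) *
      star (hA.1.eigenvectorUnitary : Matrix (Fin n) (Fin n) ℝ) = 1 :=
    mem_unitaryGroup_iff.mp hA.1.eigenvectorUnitary.2
  have hVU : star (hA.1.eigenvectorUnitary : Matrix (Fin n) (Fin n) ℝ) *
      (hA.1.eigenvectorUnitary : Matrix (Fin n) (Fin n) ℝ) = 1 :=
    mem_unitaryGroup_iff'.mp hA.1.eigenvectorUnitary.2
  have hSS : S * S = A := by
    rw [← sq, hSdef, mconj_pow _ _ _ hUV hVU, diagonal_pow]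
    conv_rhs => rw [hA.1.spectral_theorem]
    congr 2
    congr 2
    funext j
    simp [Real.sq_sqrt (hA.eigenvalues_nonneg j)]
  have hSt : Sᵀ = S := by
    simp [hSdef, Matrix.transpose_mul, Matrix.star_eq_conjTranspose,
      Matrix.conjTranspose_eq_transpose_of_trivial, mul_assoc]
  have key1 : S * B * S = (S * M) * (S * M)ᵀ := by
    rw [hM, Matrix.transpose_mul, hSt]
    simp only [mul_assoc]
  have key2 : (S * M)ᵀ * (S * M) = Mᵀ * A * M := by
    rw [Matrix.transpose_mul, hSt]
    calc Mᵀ * S * (S * M) = Mᵀ * (S * S) * M := by simp only [mul_assoc]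
    _ = Mᵀ * A * M := by rw [hSS]
  have key3 : (Lᵀ * M)ᵀ * (Lᵀ * M) = Mᵀ * A * M := by
    rw [Matrix.transpose_mul, Matrix.transpose_transpose, hL]
    simp only [mul_assoc]
  have main : (psdSqrt (psdSqrt A * B * psdSqrt A)).trace = nuclearNorm (Lᵀ * M) := by
    rw [hAs, key1, trace_psdSqrt_comm, key2, nuclearNorm, key3]
  refine ⟨main, ?_⟩
  have htrA : A.trace = frobSq L := by
    rw [hL, frobSq]
    simp [Matrix.trace, Matrix.diag, Matrix.mul_apply, sq]
  have htrB : B.trace = frobSq M := by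
    rw [hM, frobSq]
    simp [Matrix.trace, Matrix.diag, Matrix.mul_apply, sq]
  rw [distBWsq, main, htrA, htrB]
end

section
/- For block lower triangular L, M ∈ ℝ^{Nd×Nd}, dist_AW²(L,M) ≥ ∑_{t=1}^N ( ‖L_{·,t}‖_F − ‖M_{·,t}‖_F )², where L_{·,t}, M_{·,t} are the t-th column blocks. In particular dist_AW(L,M)² ≥ 0. -/
open Matrix BigOperators Classical

variable {N d : ℕ}

/-- `L` is block lower triangular: all `d×d` blocks `L_{s,t}` with `s < t` vanish. -/
def BlockLowerTri (L : Matrix (Fin N × Fin d) (Fin N × Fin d) ℝ) : Prop :=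
  ∀ s t : Fin N, s < t → ∀ i j : Fin d, L (s, i) (t, j) = 0

/-- The `t`-th `d×d` diagonal block of a matrix. -/
def diagBlock (A : Matrix (Fin N × Fin d) (Fin N × Fin d) ℝ) (t : Fin N) :
    Matrix (Fin d) (Fin d) ℝ :=
  fun i j => A (t, i) (t, j)

/-- The `t`-th column block `L_{·,t} ∈ ℝ^{Nd×d}` of `L`. -/
def colBlock (L : Matrix (Fin N × Fin d) (Fin N × Fin d) ℝ) (t : Fin N) :
    Matrix (Fin N × Fin d) (Fin d) ℝ :=
  fun p j => L p (t, j)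

/-- Block diagonal matrix built from `d×d` blocks `Q₁, …, Q_N`. -/
def blockDiag (Q : Fin N → Matrix (Fin d) (Fin d) ℝ) :
    Matrix (Fin N × Fin d) (Fin N × Fin d) ℝ :=
  fun p q => if p.1 = q.1 then Q q.1 p.2 q.2 else 0

/-- Squared adapted Wasserstein pseudo-distance between Cholesky factors:
`dist_AW²(L,M) = ‖L‖_F² + ‖M‖_F² − 2 ∑_t ‖(LᵀM)_{t,t}‖₊`. -/
noncomputable def distAWsq (L M : Matrix (Fin N × Fin d) (Fin N × Fin d) ℝ) : ℝ :=
  frobSq L + frobSq M - 2 * ∑ t : Fin N, nuclearNorm (diagBlock (Lᵀ * M) t)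

/-- Adapted Wasserstein pseudo-distance. -/
noncomputable def distAW (L M : Matrix (Fin N × Fin d) (Fin N × Fin d) ℝ) : ℝ :=
  Real.sqrt (distAWsq L M)

section Aux

variable {m n k : Type*} [Fintype m] [Fintype n] [Fintype k]

lemma frobSq_nonneg (C : Matrix m n ℝ) : 0 ≤ frobSq C :=
  Finset.sum_nonneg fun _ _ => Finset.sum_nonneg fun _ _ => sq_nonneg _

lemma frobSq_eq_trace (C : Matrix m n ℝ) : frobSq C = (Cᵀ * C).trace := by
  simp only [frobSq, Matrix.trace, Matrix.diag, Matrix.mul_apply, Matrix.transpose_apply]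
  rw [Finset.sum_comm]
  simp [sq]

lemma frobNorm_nonneg (C : Matrix m n ℝ) : 0 ≤ frobNorm C := Real.sqrt_nonneg _

lemma sq_frobNorm (C : Matrix m n ℝ) : frobNorm C ^ 2 = frobSq C :=
  Real.sq_sqrt (frobSq_nonneg C)

/-- If `W (Wᵀ W) = W`, then `W Wᵀ` is an orthogonal projection and
multiplying by `W` on the right decreases the Frobenius norm. -/
lemma frobSq_mul_proj_le (A : Matrix m n ℝ) (W : Matrix n k ℝ)
    (hW : W * (Wᵀ * W) = W) : frobSq (A * W) ≤ frobSq A := by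
  set P : Matrix n n ℝ := W * Wᵀ with hPdef
  have hPt : Pᵀ = P := by rw [hPdef, Matrix.transpose_mul, Matrix.transpose_transpose]
  have hP2 : P * P = P := by
    rw [hPdef]
    calc W * Wᵀ * (W * Wᵀ) = W * (Wᵀ * W) * Wᵀ := by
          simp only [Matrix.mul_assoc]
      _ = W * Wᵀ := by rw [hW]
  have hAW : frobSq (A * W) = ((Aᵀ * A) * P).trace := by
    rw [frobSq_eq_trace, Matrix.transpose_mul]
    rw [show Wᵀ * Aᵀ * (A * W) = Wᵀ * (Aᵀ * A) * W by simp only [Matrix.mul_assoc]]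
    rw [Matrix.trace_mul_comm]
    rw [show W * (Wᵀ * (Aᵀ * A)) = W * Wᵀ * (Aᵀ * A) by simp only [Matrix.mul_assoc]]
    rw [Matrix.trace_mul_comm]
  have hExp : frobSq (A - A * P) = (Aᵀ * A).trace - ((Aᵀ * A) * P).trace := by
    rw [frobSq_eq_trace]
    have e1 : (A - A * P)ᵀ * (A - A * P)
        = Aᵀ * A - (Aᵀ * A) * P - P * (Aᵀ * A) + P * ((Aᵀ * A) * P) := by
      rw [Matrix.transpose_sub, Matrix.transpose_mul, hPt,
        Matrix.sub_mul, Matrix.mul_sub, Matrix.mul_sub]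
      simp only [Matrix.mul_assoc]
      abel
    rw [e1, Matrix.trace_add, Matrix.trace_sub, Matrix.trace_sub]
    have e2 : (P * (Aᵀ * A)).trace = ((Aᵀ * A) * P).trace := Matrix.trace_mul_comm _ _
    have e3 : (P * ((Aᵀ * A) * P)).trace = ((Aᵀ * A) * P).trace := by
      rw [Matrix.trace_mul_comm, Matrix.mul_assoc, hP2, Matrix.trace_mul_comm]
    rw [e2, e3]; ring
  have h0 : 0 ≤ frobSq (A - A * P) := frobSq_nonneg _
  have : frobSq A = (Aᵀ * A).trace := frobSq_eq_trace A
  linarith [hExp, hAW]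

/-- `(M x) ⬝ (M y) = x ⬝ ((Mᵀ M) y)`. -/
lemma dot_mulVec_mulVec (M : Matrix m n ℝ) (x y : n → ℝ) :
    (M *ᵥ x) ⬝ᵥ (M *ᵥ y) = x ⬝ᵥ ((Mᵀ * M) *ᵥ y) := by
  rw [← Matrix.mulVec_mulVec, Matrix.dotProduct_mulVec x, Matrix.vecMul_transpose]

/-- `u ⬝ ((Aᵀ B) v) = (A u) ⬝ (B v)`. -/
lemma dot_transpose_mul_mulVec (A B : Matrix m n ℝ) (u v : n → ℝ) :
    u ⬝ᵥ ((Aᵀ * B) *ᵥ v) = (A *ᵥ u) ⬝ᵥ (B *ᵥ v) := by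
  rw [← Matrix.mulVec_mulVec, Matrix.dotProduct_mulVec u, Matrix.vecMul_transpose]

lemma trace_conj_aux {n : Type*} [Fintype n] [DecidableEq n] (X D Y : Matrix n n ℝ) (h : Y * X = 1) :
    (X * D * Y).trace = D.trace := by
  rw [Matrix.trace_mul_comm, ← Matrix.mul_assoc, h, Matrix.one_mul]

/-- Key inequality: the nuclear norm of `Aᵀ B` is at most the product of the
Frobenius norms of `A` and `B` (matrix Cauchy–Schwarz / von Neumann). -/
lemma nuclearNorm_transpose_mul_le [DecidableEq n] (A B : Matrix m n ℝ) :
    nuclearNorm (Aᵀ * B) ≤ frobNorm A * frobNorm B := by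
  set C : Matrix n n ℝ := Aᵀ * B with hCdef
  have hH : (Cᵀ * C).PosSemidef := by
    have := Matrix.posSemidef_conjTranspose_mul_self C
    rwa [Matrix.conjTranspose_eq_transpose_of_trivial] at this
  set μ : n → ℝ := hH.1.eigenvalues with hμdef
  have hμ0 : ∀ j, 0 ≤ μ j := hH.eigenvalues_nonneg
  set σ : n → ℝ := fun j => Real.sqrt (μ j) with hσdef
  have hσ0 : ∀ j, 0 ≤ σ j := fun j => Real.sqrt_nonneg _
  have hσsq : ∀ j, σ j ^ 2 = μ j := fun j => Real.sq_sqrt (hμ0 j)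
  set U : Matrix n n ℝ := (hH.1.eigenvectorUnitary : Matrix n n ℝ) with hUdef
  set v : n → n → ℝ := fun j => ⇑(hH.1.eigenvectorBasis j) with hvdef
  have hUv : ∀ i j, U i j = v j i := fun i j =>
    Matrix.IsHermitian.eigenvectorUnitary_apply _ i j
  have hUtU : Uᵀ * U = 1 := by
    have := Unitary.coe_star_mul_self hH.1.eigenvectorUnitary
    rwa [Matrix.star_eq_conjTranspose, Matrix.conjTranspose_eq_transpose_of_trivial] at this
  have hUUt : U * Uᵀ = 1 := mul_eq_one_comm.mp hUtU
  have horth : ∀ j k', v j ⬝ᵥ v k' = if j = k' then 1 else 0 := by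
    intro j k'
    have : (Uᵀ * U) j k' = (1 : Matrix n n ℝ) j k' := by rw [hUtU]
    simpa [Matrix.mul_apply, Matrix.transpose_apply, Matrix.one_apply, hUv,
      dotProduct] using this
  have heig : ∀ j, (Cᵀ * C) *ᵥ v j = μ j • v j := fun j =>
    hH.1.mulVec_eigenvectorBasis j
  have hCv : ∀ j k', (C *ᵥ v j) ⬝ᵥ (C *ᵥ v k') = μ k' * (if j = k' then 1 else 0) := by
    intro j k'
    rw [dot_mulVec_mulVec, heig, dotProduct_smul, smul_eq_mul, horth]
  -- the "left singular vectors"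
  set u : n → n → ℝ := fun j => (σ j)⁻¹ • (C *ᵥ v j) with hudef
  set W : Matrix n n ℝ := Matrix.of fun i j => u j i with hWdef
  have hWW : Wᵀ * W = Matrix.diagonal (fun j => if σ j = 0 then 0 else 1) := by
    ext j k'
    have : (Wᵀ * W) j k' = u j ⬝ᵥ u k' := by
      simp [Matrix.mul_apply, Matrix.transpose_apply, dotProduct, hWdef]
    rw [this, hudef]
    simp only [smul_dotProduct, dotProduct_smul, smul_eq_mul, hCv]
    rcases eq_or_ne j k' with rfl | hjk
    · rcases eq_or_ne (σ j) 0 with h0 | h0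
      · have : μ j = 0 := by rw [← hσsq, h0]; ring
        simp [Matrix.diagonal_apply_eq, h0, this]
      · have hμj : μ j = σ j ^ 2 := (hσsq j).symm
        rw [Matrix.diagonal_apply_eq]
        rw [if_neg h0, if_pos rfl, hμj]
        field_simp
    · simp [Matrix.diagonal_apply_ne _ hjk, hjk]
  have hWproj : W * (Wᵀ * W) = W := by
    rw [hWW]
    ext i j
    rw [Matrix.mul_diagonal]
    rcases eq_or_ne (σ j) 0 with h0 | h0
    · have : W i j = 0 := by simp [hWdef, hudef, h0]
      simp [this, h0]
    · simp [h0]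
  -- entries of A * W and B * U
  have hAWapp : ∀ i j, (A * W) i j = (A *ᵥ u j) i := by
    intro i j; simp [Matrix.mul_apply, Matrix.mulVec, dotProduct, hWdef]
  have hBUapp : ∀ i j, (B * U) i j = (B *ᵥ v j) i := by
    intro i j; simp [Matrix.mul_apply, Matrix.mulVec, dotProduct, hUv]
  set a : n → ℝ := fun j => Real.sqrt (∑ i, (A *ᵥ u j) i ^ 2) with hadef
  set b : n → ℝ := fun j => Real.sqrt (∑ i, (B *ᵥ v j) i ^ 2) with hbdef
  have hstep1 : ∀ j, σ j ≤ a j * b j := by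
    intro j
    rcases eq_or_ne (σ j) 0 with h0 | h0
    · rw [h0]; exact mul_nonneg (Real.sqrt_nonneg _) (Real.sqrt_nonneg _)
    · have hσval : σ j = (A *ᵥ u j) ⬝ᵥ (B *ᵥ v j) := by
        rw [← dot_transpose_mul_mulVec, ← hCdef, hudef, smul_dotProduct,
          smul_eq_mul, hCv]
        simp only [if_pos rfl, mul_one, ↓reduceIte]
        rw [← hσsq j]
        field_simp
      rw [hσval]
      have := Real.sum_mul_le_sqrt_mul_sqrt Finset.univ (fun i => (A *ᵥ u j) i)
        (fun i => (B *ᵥ v j) i)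
      simpa [dotProduct, hadef, hbdef] using this
  have hsum_a : ∑ j, a j ^ 2 = frobSq (A * W) := by
    rw [frobSq]
    rw [Finset.sum_comm]
    refine Finset.sum_congr rfl fun j _ => ?_
    rw [hadef, Real.sq_sqrt (Finset.sum_nonneg fun _ _ => sq_nonneg _)]
    exact Finset.sum_congr rfl fun i _ => by rw [hAWapp]
  have hsum_b : ∑ j, b j ^ 2 = frobSq (B * U) := by
    rw [frobSq]
    rw [Finset.sum_comm]
    refine Finset.sum_congr rfl fun j _ => ?_
    rw [hbdef, Real.sq_sqrt (Finset.sum_nonneg fun _ _ => sq_nonneg _)]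
    exact Finset.sum_congr rfl fun i _ => by rw [hBUapp]
  have hfrobA : frobSq (A * W) ≤ frobSq A := frobSq_mul_proj_le A W hWproj
  have hfrobB : frobSq (B * U) = frobSq B := by
    rw [frobSq_eq_trace, frobSq_eq_trace, Matrix.transpose_mul, Matrix.trace_mul_cycle]
    rw [show B * U * Uᵀ = B by rw [Matrix.mul_assoc, hUUt, Matrix.mul_one]]
    exact Matrix.trace_mul_comm B Bᵀ
  -- sum of singular values is bounded
  have hmain : ∑ j, σ j ≤ frobNorm A * frobNorm B := by
    calc ∑ j, σ j ≤ ∑ j, a j * b j := Finset.sum_le_sum fun j _ => hstep1 j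
      _ ≤ Real.sqrt (∑ j, a j ^ 2) * Real.sqrt (∑ j, b j ^ 2) :=
          Real.sum_mul_le_sqrt_mul_sqrt _ _ _
      _ = Real.sqrt (frobSq (A * W)) * Real.sqrt (frobSq (B * U)) := by
          rw [hsum_a, hsum_b]
      _ ≤ Real.sqrt (frobSq A) * Real.sqrt (frobSq B) :=
          mul_le_mul (Real.sqrt_le_sqrt hfrobA)
            (by rw [hfrobB]) (Real.sqrt_nonneg _) (Real.sqrt_nonneg _)
      _ = frobNorm A * frobNorm B := rfl
  -- compute the nuclear norm as the sum of singular values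
  have htr : nuclearNorm C = ∑ j, σ j := by
    have hstar : (star hH.1.eigenvectorUnitary : Matrix n n ℝ) *
        (hH.1.eigenvectorUnitary : Matrix n n ℝ) = 1 :=
      Unitary.coe_star_mul_self hH.1.eigenvectorUnitary
    rw [nuclearNorm, psdSqrt, dif_pos hH, trace_conj_aux _ _ _ hstar,
      Matrix.trace_diagonal]
    simp [hσdef, hμdef]
  rw [htr]
  exact hmain

end Aux

section MainAux

variable {N d : ℕ}

lemma diagBlock_transpose_mul (L M : Matrix (Fin N × Fin d) (Fin N × Fin d) ℝ)
    (t : Fin N) :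
    diagBlock (Lᵀ * M) t = (colBlock L t)ᵀ * (colBlock M t) := by
  ext i j
  simp [diagBlock, colBlock, Matrix.mul_apply, Matrix.transpose_apply]

lemma frobSq_eq_sum_colBlock (L : Matrix (Fin N × Fin d) (Fin N × Fin d) ℝ) :
    frobSq L = ∑ t : Fin N, frobSq (colBlock L t) := by
  have h1 : frobSq L = ∑ p, ∑ t : Fin N, ∑ j, L p (t, j) ^ 2 := by
    refine Finset.sum_congr rfl fun p _ => ?_
    exact Fintype.sum_prod_type _
  rw [h1, Finset.sum_comm]
  rfl

end MainAux

/-- Lower bound: `dist_AW²(L,M) ≥ ∑_t (‖L_{·,t}‖_F − ‖M_{·,t}‖_F)²`; in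
particular `dist_AW²(L,M) ≥ 0`. -/
theorem distAWsq_lower_bound (N d : ℕ)
    (L M : Matrix (Fin N × Fin d) (Fin N × Fin d) ℝ)
    (hL : BlockLowerTri L) (hM : BlockLowerTri M) :
    (∑ t : Fin N, (frobNorm (colBlock L t) - frobNorm (colBlock M t)) ^ 2)
        ≤ distAWsq L M ∧
    0 ≤ distAWsq L M := by
  have key : (∑ t : Fin N, (frobNorm (colBlock L t) - frobNorm (colBlock M t)) ^ 2)
      ≤ distAWsq L M := by
    rw [distAWsq, frobSq_eq_sum_colBlock L, frobSq_eq_sum_colBlock M,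
      Finset.mul_sum, ← Finset.sum_add_distrib, ← Finset.sum_sub_distrib]
    refine Finset.sum_le_sum fun t _ => ?_
    have hnuc : nuclearNorm (diagBlock (Lᵀ * M) t)
        ≤ frobNorm (colBlock L t) * frobNorm (colBlock M t) := by
      rw [diagBlock_transpose_mul]
      exact nuclearNorm_transpose_mul_le _ _
    have hLt := sq_frobNorm (colBlock L t)
    have hMt := sq_frobNorm (colBlock M t)
    nlinarith [hnuc, hLt, hMt]
  refine ⟨key, le_trans ?_ key⟩
  exact Finset.sum_nonneg fun t _ => sq_nonneg _
end

section
/- For every real n×n positive semidefinite matrix A there exists a unique lower triangular matrix L with nonnegative diagonal entries such that LLᵀ = A and, for every index i with L_{ii} = 0, the entire i-th column of L is zero. -/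
open Matrix BigOperators
open InnerProductSpace

local notation "⟪" x ", " y "⟫" => @inner ℝ _ _ x y

section Aux

variable {n : ℕ}

/-- Existence of the minimal Cholesky factor. -/
theorem minimal_cholesky_exists (A : Matrix (Fin n) (Fin n) ℝ) (hA : A.PosSemidef) :
    ∃ L : Matrix (Fin n) (Fin n) ℝ,
      (∀ i j : Fin n, i < j → L i j = 0) ∧
      (∀ i : Fin n, 0 ≤ L i i) ∧
      L * Lᵀ = A ∧
      (∀ i : Fin n, L i i = 0 → ∀ j : Fin n, L j i = 0) := by
  classical
  haveI : WellFoundedLT (Fin n) := inferInstance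
  obtain ⟨B, hB⟩ : ∃ B : Matrix (Fin n) (Fin n) ℝ, A = Bᴴ * B := by
    open scoped MatrixOrder in exact (CStarAlgebra.nonneg_iff_eq_star_mul_self.mp hA.nonneg)
  set v : Fin n → EuclideanSpace ℝ (Fin n) := fun i => WithLp.toLp 2 (fun k => B k i) with hv
  have hAv : ∀ i j, ⟪v i, v j⟫ = A i j := by
    intro i j
    rw [hB]
    simp [hv, PiLp.inner_apply, Matrix.mul_apply, Matrix.conjTranspose_apply, RCLike.inner_apply, mul_comm]
  set g : Fin n → EuclideanSpace ℝ (Fin n) := gramSchmidt ℝ v with hg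
  set e : Fin n → EuclideanSpace ℝ (Fin n) := gramSchmidtNormed ℝ v with he
  have heg : ∀ k, e k = (‖g k‖)⁻¹ • g k := by
    intro k
    rw [he, gramSchmidtNormed, ← hg, RCLike.ofReal_real_eq_id, id_eq]
  have hge : ∀ k, g k = ‖g k‖ • e k := by
    intro k
    by_cases h : g k = 0
    · simp [heg, h]
    · rw [heg, smul_smul, mul_inv_cancel₀ (norm_ne_zero_iff.mpr h), one_smul]
  -- orthogonality facts
  have horth : ∀ k m, k ≠ m → ⟪e k, e m⟫ = 0 := by
    intro k m hkm
    rw [heg, heg, real_inner_smul_left, real_inner_smul_right,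
      gramSchmidt_orthogonal ℝ v hkm, mul_zero, mul_zero]
  have hnorm : ∀ m, e m ≠ 0 → ⟪e m, e m⟫ = 1 := by
    intro m hm
    rw [real_inner_self_eq_norm_sq, gramSchmidtNormed_unit_length' (by rw [← he]; exact hm)]
    norm_num
  -- expansion of v i in terms of e
  have hexp : ∀ i, v i = ∑ k, ⟪e k, v i⟫ • e k := by
    intro i
    set w : EuclideanSpace ℝ (Fin n) := v i - ∑ k, ⟪e k, v i⟫ • e k with hw
    have hwmem : w ∈ Submodule.span ℝ (Set.range e) := by
      apply Submodule.sub_mem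
      · have h1 : Submodule.span ℝ (Set.range e) = Submodule.span ℝ (Set.range v) := by
          rw [he, span_gramSchmidtNormed_range, span_gramSchmidt]
        rw [h1]
        exact Submodule.subset_span (Set.mem_range_self i)
      · exact Submodule.sum_mem _ fun k _ => Submodule.smul_mem _ _
          (Submodule.subset_span (Set.mem_range_self k))
    have hworth : ∀ m, ⟪e m, w⟫ = 0 := by
      intro m
      by_cases hm : e m = 0
      · simp [hm]
      · rw [hw, inner_sub_right, inner_sum]
        have : ∀ k ∈ Finset.univ, ⟪e m, ⟪e k, v i⟫ • e k⟫
            = if k = m then ⟪e m, v i⟫ else 0 := by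
          intro k _
          rcases eq_or_ne k m with rfl | hkm
          · rw [real_inner_smul_right, hnorm k hm, mul_one, if_pos rfl]
          · rw [real_inner_smul_right, horth m k (Ne.symm hkm), mul_zero, if_neg hkm]
        rw [Finset.sum_congr rfl this, Finset.sum_ite_eq' Finset.univ m fun _ => ⟪e m, v i⟫]
        simp
    have hww : ⟪w, w⟫ = 0 := by
      have : ∀ u ∈ Submodule.span ℝ (Set.range e), ⟪u, w⟫ = 0 := by
        intro u hu
        induction hu using Submodule.span_induction with
        | mem x hx => obtain ⟨m, rfl⟩ := hx; exact hworth m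
        | zero => simp
        | add x y _ _ hx hy => rw [inner_add_left, hx, hy, add_zero]
        | smul c x _ hx => rw [real_inner_smul_left, hx, mul_zero]
      exact this w hwmem
    have : w = 0 := by rwa [inner_self_eq_zero] at hww
    rw [hw, sub_eq_zero] at this
    exact this
  -- inner of g with v on the diagonal
  have hgv : ∀ i, ⟪g i, v i⟫ = ‖g i‖ ^ 2 := by
    intro i
    have h := gramSchmidt_def'' ℝ v i
    rw [h, inner_add_right, inner_sum]
    simp only [real_inner_smul_right]
    rw [Finset.sum_eq_zero fun j hj => by
      rw [gramSchmidt_orthogonal ℝ v (Finset.mem_Iio.mp hj).ne', mul_zero]]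
    rw [add_zero, real_inner_self_eq_norm_sq]
  -- the candidate matrix
  refine ⟨Matrix.of fun i j => ⟪e j, v i⟫, ?_, ?_, ?_, ?_⟩
  · intro i j hij
    show ⟪e j, v i⟫ = 0
    rw [heg, real_inner_smul_left, gramSchmidt_inv_triangular ℝ v hij, mul_zero]
  · intro i
    show (0:ℝ) ≤ ⟪e i, v i⟫
    rw [heg, real_inner_smul_left, hgv i]
    positivity
  · ext i j
    rw [Matrix.mul_apply]
    simp only [Matrix.transpose_apply, Matrix.of_apply]
    rw [← hAv i j]
    conv_rhs => rw [hexp j]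
    rw [inner_sum]
    simp only [real_inner_smul_right]
    refine Finset.sum_congr rfl fun k _ => ?_
    rw [real_inner_comm (v i) (e k)]
    ring
  · intro i hii j
    show ⟪e i, v j⟫ = 0
    have h0 : ⟪e i, v i⟫ = 0 := hii
    rw [heg, real_inner_smul_left, hgv i] at h0
    have hgi : g i = 0 := by
      by_contra hne
      have hn : ‖g i‖ ≠ 0 := norm_ne_zero_iff.mpr hne
      rw [pow_two, ← mul_assoc, inv_mul_cancel₀ hn, one_mul] at h0
      exact hn h0
    rw [heg, hgi, smul_zero]
    simp

/-- Uniqueness of the minimal Cholesky factor. -/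
theorem minimal_cholesky_unique (A L M : Matrix (Fin n) (Fin n) ℝ)
    (hL1 : ∀ i j : Fin n, i < j → L i j = 0) (hL2 : ∀ i : Fin n, 0 ≤ L i i)
    (hL3 : L * Lᵀ = A) (hL4 : ∀ i : Fin n, L i i = 0 → ∀ j : Fin n, L j i = 0)
    (hM1 : ∀ i j : Fin n, i < j → M i j = 0) (hM2 : ∀ i : Fin n, 0 ≤ M i i)
    (hM3 : M * Mᵀ = A) (hM4 : ∀ i : Fin n, M i i = 0 → ∀ j : Fin n, M j i = 0) :
    L = M := by
  have hAe : ∀ p q : Fin n, ∑ k, L p k * L q k = ∑ k, M p k * M q k := by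
    intro p q
    have h3 : (L * Lᵀ) p q = (M * Mᵀ) p q := by rw [hL3, hM3]
    simpa [Matrix.mul_apply, Matrix.transpose_apply] using h3
  have hcol : ∀ m : ℕ, ∀ i : Fin n, (i : ℕ) = m → ∀ j : Fin n, L j i = M j i := by
    intro m
    induction m using Nat.strong_induction_on with
    | _ m IH =>
      intro i him j
      subst him
      have IH' : ∀ k : Fin n, k < i → ∀ j : Fin n, L j k = M j k := fun k hk j =>
        IH (k : ℕ) hk k rfl j
      have hterm : ∀ p k : Fin n, k ≠ i → L p k * L i k = M p k * M i k := by
        intro p k hk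
        rcases lt_or_gt_of_ne hk with h | h
        · rw [IH' k h p, IH' k h i]
        · rw [hL1 i k h, hM1 i k h, mul_zero, mul_zero]
      have hdiag : L i i = M i i := by
        have h := hAe i i
        rw [← Finset.sum_erase_add _ _ (Finset.mem_univ i),
          ← Finset.sum_erase_add _ _ (Finset.mem_univ i)] at h
        have hs : ∑ k ∈ Finset.univ.erase i, L i k * L i k
            = ∑ k ∈ Finset.univ.erase i, M i k * M i k :=
          Finset.sum_congr rfl fun k hk => hterm i k (Finset.ne_of_mem_erase hk)
        have h2 : L i i * L i i = M i i * M i i := by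
          rw [hs] at h
          linarith
        exact (mul_self_inj_of_nonneg (hL2 i) (hM2 i)).mp h2
      by_cases hii : L i i = 0
      · rw [hL4 i hii j, hM4 i (hdiag ▸ hii) j]
      · have h := hAe j i
        rw [← Finset.sum_erase_add _ _ (Finset.mem_univ i),
          ← Finset.sum_erase_add _ _ (Finset.mem_univ i)] at h
        have hs : ∑ k ∈ Finset.univ.erase i, L j k * L i k
            = ∑ k ∈ Finset.univ.erase i, M j k * M i k :=
          Finset.sum_congr rfl fun k hk => hterm j k (Finset.ne_of_mem_erase hk)
        have h2 : L j i * L i i = M j i * M i i := by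
          rw [hs] at h
          linarith
        rw [← hdiag] at h2
        exact mul_right_cancel₀ hii h2
  ext p q
  exact hcol (q : ℕ) q rfl p

end Aux

/-- Minimal Cholesky factor: every real positive semidefinite matrix `A` has a
unique lower triangular factor `L` with nonnegative diagonal such that
`LLᵀ = A` and the `i`-th column of `L` vanishes whenever `L i i = 0`. -/
theorem exists_unique_minimal_cholesky (n : ℕ) (A : Matrix (Fin n) (Fin n) ℝ)
    (hA : A.PosSemidef) :
    ∃! L : Matrix (Fin n) (Fin n) ℝ,
      (∀ i j : Fin n, i < j → L i j = 0) ∧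
      (∀ i : Fin n, 0 ≤ L i i) ∧
      L * Lᵀ = A ∧
      (∀ i : Fin n, L i i = 0 → ∀ j : Fin n, L j i = 0) := by
  obtain ⟨L, h1, h2, h3, h4⟩ := minimal_cholesky_exists A hA
  refine ⟨L, ⟨h1, h2, h3, h4⟩, ?_⟩
  rintro M ⟨m1, m2, m3, m4⟩
  exact minimal_cholesky_unique A M L m1 m2 m3 m4 h1 h2 h3 h4
end
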